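/- Let $E$ be a measurable space, $U$ a nonempty set, $c_n : E \times U \to \mathbb{R}$ bounded, and $P_n^a(x, \cdot)$ Markov kernels on $E$ indexed by $a \in U$. Define $T_n v(x) = \sup_{a \in U}\big[c_n(x,a) + \int_E v(y)\, P_n^a(x, dy)\big]$ for bounded measurable $v$. Then for bounded measurable $v_1, v_2$, $\|T_n v_1 - T_n v_2\|_{sp} \le \Delta_n \|v_1 - v_2\|_{sp}$, where $\Delta_n := \sup_{x,x' \in E} \sup_{a,a' \in U} \sup_{B \in \mathcal{E}} \big(P_n^a(x,B) - P_n^{a'}(x',B)\big)$ is the Dobrushin-type coefficient. -/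

import Mathlib

open MeasureTheory Filter

/-- Span seminorm of a real-valued function. -/
noncomputable def spanSeminorm {E : Type*} (v : E → ℝ) : ℝ :=
  ⨆ p : E × E, (v p.1 - v p.2)

section aux
set_option linter.unusedSectionVars false

variable {E : Type*} [MeasurableSpace E]

lemma aux_integrable {μ : Measure E} [IsFiniteMeasure μ] {u : E → ℝ} (hm : Measurable u)
    {K : ℝ} (hK : ∀ x, |u x| ≤ K) : Integrable u μ :=
  ⟨hm.aestronglyMeasurable,
    HasFiniteIntegral.of_bounded (C := K) (ae_of_all _ (by simpa using hK))⟩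

lemma aux_span_bddAbove {u : E → ℝ} {K : ℝ} (hK : ∀ x, |u x| ≤ K) :
    BddAbove (Set.range fun p : E × E => u p.1 - u p.2) := by
  refine ⟨2 * K, ?_⟩
  rintro _ ⟨p, rfl⟩
  have h1 := abs_le.1 (hK p.1)
  have h2 := abs_le.1 (hK p.2)
  dsimp; linarith

lemma aux_sub_le_span {u : E → ℝ} {K : ℝ} (hK : ∀ x, |u x| ≤ K) (x y : E) :
    u x - u y ≤ spanSeminorm u :=
  le_ciSup (aux_span_bddAbove hK) (x, y)

lemma aux_span_nonneg [Nonempty E] {u : E → ℝ} {K : ℝ} (hK : ∀ x, |u x| ≤ K) :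
    0 ≤ spanSeminorm u := by
  obtain x := Classical.arbitrary E
  have := aux_sub_le_span hK x x
  simpa using this

/-- Key lemma: via Hahn decomposition, the difference of integrals of a bounded
measurable function against two probability measures is controlled by the
measure difference on some set times the span seminorm. -/
lemma aux_key [Nonempty E] (μ ν : Measure E) [IsProbabilityMeasure μ] [IsProbabilityMeasure ν]
    {u : E → ℝ} (hm : Measurable u) {K : ℝ} (hK : ∀ x, |u x| ≤ K) :
    ∃ D : Set E, MeasurableSet D ∧
      (∫ x, u x ∂μ) - (∫ x, u x ∂ν) ≤ ((μ D).toReal - (ν D).toReal) * spanSeminorm u := by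
  obtain ⟨D, hD, hpos, hneg⟩ := hahn_decomposition (μ := μ) (ν := ν)
  refine ⟨D, hD, ?_⟩
  set m : ℝ := ⨅ x, u x with hmdef
  have hbdd_below : BddBelow (Set.range u) :=
    ⟨-K, by rintro _ ⟨x, rfl⟩; linarith [(abs_le.1 (hK x)).1]⟩
  have hg0 : ∀ x, 0 ≤ u x - m := fun x => sub_nonneg.2 (ciInf_le hbdd_below x)
  have hgle : ∀ x, u x - m ≤ spanSeminorm u := by
    intro x
    have : u x - spanSeminorm u ≤ m :=
      le_ciInf fun y => by linarith [aux_sub_le_span hK x y]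
    linarith
  set g : E → ℝ := fun x => u x - m with hgdef
  have hgm : Measurable g := hm.sub measurable_const
  have hgK : ∀ x, |g x| ≤ K + |m| := by
    intro x
    calc |u x - m| ≤ |u x| + |m| := abs_sub _ _
    _ ≤ K + |m| := by linarith [hK x]
  -- restriction inequalities
  have hle1 : ν.restrict D ≤ μ.restrict D := by
    refine Measure.le_iff.2 fun s hs => ?_
    rw [Measure.restrict_apply hs, Measure.restrict_apply hs]
    exact hpos _ (hs.inter hD) Set.inter_subset_right
  have hle2 : μ.restrict Dᶜ ≤ ν.restrict Dᶜ := by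
    refine Measure.le_iff.2 fun s hs => ?_
    rw [Measure.restrict_apply hs, Measure.restrict_apply hs]
    exact hneg _ (hs.inter hD.compl) Set.inter_subset_right
  set lam : Measure E := μ.restrict D - ν.restrict D with hlamdef
  haveI : IsFiniteMeasure lam :=
    isFiniteMeasure_of_le (μ.restrict D) Measure.sub_le
  have hsplit : μ.restrict D = lam + ν.restrict D :=
    (Measure.sub_add_cancel_of_le hle1).symm
  have hintD : (∫ x in D, g x ∂μ) = (∫ x, g x ∂lam) + ∫ x in D, g x ∂ν := by
    conv_lhs => rw [hsplit]
    exact integral_add_measure (aux_integrable hgm hgK) (aux_integrable hgm hgK)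
  have hlam_univ : (lam Set.univ).toReal = (μ D).toReal - (ν D).toReal := by
    rw [hlamdef, Measure.sub_apply MeasurableSet.univ hle1,
      Measure.restrict_apply_univ, Measure.restrict_apply_univ]
    exact ENNReal.toReal_sub_of_le (hpos D hD le_rfl) (measure_ne_top μ D)
  have hlam_bound : (∫ x, g x ∂lam) ≤ ((μ D).toReal - (ν D).toReal) * spanSeminorm u := by
    calc (∫ x, g x ∂lam) ≤ ∫ _x, spanSeminorm u ∂lam :=
          integral_mono (aux_integrable hgm hgK) (integrable_const _) hgle
    _ = (lam Set.univ).toReal * spanSeminorm u := by rw [integral_const, smul_eq_mul]; rfl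
    _ = ((μ D).toReal - (ν D).toReal) * spanSeminorm u := by rw [hlam_univ]
  have hcompl : (∫ x in Dᶜ, g x ∂μ) ≤ ∫ x in Dᶜ, g x ∂ν :=
    integral_mono_measure hle2 (ae_of_all _ hg0) (aux_integrable hgm hgK)
  have hμsplit : (∫ x in D, g x ∂μ) + (∫ x in Dᶜ, g x ∂μ) = ∫ x, g x ∂μ :=
    integral_add_compl hD (aux_integrable hgm hgK)
  have hνsplit : (∫ x in D, g x ∂ν) + (∫ x in Dᶜ, g x ∂ν) = ∫ x, g x ∂ν :=
    integral_add_compl hD (aux_integrable hgm hgK)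
  have hgμ : (∫ x, g x ∂μ) = (∫ x, u x ∂μ) - m := by
    rw [hgdef]
    rw [integral_sub (aux_integrable hm hK) (integrable_const _), integral_const]
    simp
  have hgν : (∫ x, g x ∂ν) = (∫ x, u x ∂ν) - m := by
    rw [hgdef]
    rw [integral_sub (aux_integrable hm hK) (integrable_const _), integral_const]
    simp
  linarith

end aux

theorem stmt_5 {E U : Type*} [MeasurableSpace E] [Nonempty E] [Nonempty U]
    (P : ℕ → U → E → Measure E) (hP : ∀ n a x, IsProbabilityMeasure (P n a x))
    (c : ℕ → E → U → ℝ) (hcb : ∀ n, ∃ M, ∀ x a, |c n x a| ≤ M)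
    (n : ℕ) (Δn : ℝ)
    (hΔ : Δn = ⨆ q : (E × E) × (U × U) × {B : Set E // MeasurableSet B},
      ((P n q.2.1.1 q.1.1 q.2.2.1).toReal - (P n q.2.1.2 q.1.2 q.2.2.1).toReal))
    (v₁ v₂ : E → ℝ) (hm₁ : Measurable v₁) (hm₂ : Measurable v₂)
    (hb₁ : ∃ M, ∀ x, |v₁ x| ≤ M) (hb₂ : ∃ M, ∀ x, |v₂ x| ≤ M) :
    spanSeminorm
        ((fun x => ⨆ a : U, (c n x a + ∫ y, v₁ y ∂(P n a x))) -
          fun x => ⨆ a : U, (c n x a + ∫ y, v₂ y ∂(P n a x)))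
      ≤ Δn * spanSeminorm (v₁ - v₂) := by
  classical
  haveI := fun a x => hP n a x
  obtain ⟨Mc, hMc⟩ := hcb n
  obtain ⟨K₁, hK₁⟩ := hb₁
  obtain ⟨K₂, hK₂⟩ := hb₂
  set u : E → ℝ := v₁ - v₂ with hudef
  have hum : Measurable u := hm₁.sub hm₂
  have huK : ∀ x, |u x| ≤ K₁ + K₂ := by
    intro x
    calc |v₁ x - v₂ x| ≤ |v₁ x| + |v₂ x| := abs_sub _ _
    _ ≤ K₁ + K₂ := add_le_add (hK₁ x) (hK₂ x)
  -- bound on integrals of bounded functions w.r.t. probability measures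
  have hIb : ∀ {v : E → ℝ} {Kv : ℝ}, (∀ x, |v x| ≤ Kv) → ∀ (a : U) (x : E),
      |∫ y, v y ∂(P n a x)| ≤ Kv := by
    intro v Kv hv a x
    have := norm_integral_le_of_norm_le_const (μ := P n a x) (f := v) (C := Kv)
      (ae_of_all _ fun y => by simpa using hv y)
    simpa using this
  -- BddAbove facts
  have hbdd₁ : ∀ x : E, BddAbove (Set.range fun a : U => c n x a + ∫ y, v₁ y ∂(P n a x)) := by
    intro x
    refine ⟨Mc + K₁, ?_⟩
    rintro _ ⟨a, rfl⟩
    have h1 := abs_le.1 (hMc x a)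
    have h2 := abs_le.1 (hIb hK₁ a x)
    dsimp; linarith
  have hbdd₂ : ∀ x : E, BddAbove (Set.range fun a : U => c n x a + ∫ y, v₂ y ∂(P n a x)) := by
    intro x
    refine ⟨Mc + K₂, ?_⟩
    rintro _ ⟨a, rfl⟩
    have h1 := abs_le.1 (hMc x a)
    have h2 := abs_le.1 (hIb hK₂ a x)
    dsimp; linarith
  have hint_sub : ∀ (a : U) (x : E),
      (∫ y, u y ∂(P n a x)) = (∫ y, v₁ y ∂(P n a x)) - ∫ y, v₂ y ∂(P n a x) := by
    intro a x
    have : (∫ y, u y ∂(P n a x)) = ∫ y, v₁ y - v₂ y ∂(P n a x) := rfl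
    rw [this, integral_sub (aux_integrable hm₁ hK₁) (aux_integrable hm₂ hK₂)]
  -- Δn is nonneg and dominates each measure difference
  have hΔbdd : BddAbove (Set.range fun q : (E × E) × (U × U) × {B : Set E // MeasurableSet B} =>
      ((P n q.2.1.1 q.1.1 q.2.2.1).toReal - (P n q.2.1.2 q.1.2 q.2.2.1).toReal)) := by
    refine ⟨1, ?_⟩
    rintro _ ⟨q, rfl⟩
    have h1 : ((P n q.2.1.1 q.1.1) q.2.2.1).toReal ≤ 1 := by
      have := prob_le_one (μ := P n q.2.1.1 q.1.1) (s := q.2.2.1)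
      simpa using ENNReal.toReal_mono (by simp) this
    have h2 : (0:ℝ) ≤ ((P n q.2.1.2 q.1.2) q.2.2.1).toReal := ENNReal.toReal_nonneg
    dsimp; linarith
  have hΔle : ∀ (a a' : U) (x₁ x₂ : E) (B : Set E), MeasurableSet B →
      ((P n a x₁ B).toReal - (P n a' x₂ B).toReal) ≤ Δn := by
    intro a a' x₁ x₂ B hB
    rw [hΔ]
    exact le_ciSup hΔbdd ⟨(x₁, x₂), (a, a'), ⟨B, hB⟩⟩
  have hspan0 : 0 ≤ spanSeminorm u := aux_span_nonneg huK
  -- key pairwise bound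
  have hS_each : ∀ (a a' : U) (x₁ x₂ : E),
      (∫ y, u y ∂(P n a x₁)) - (∫ y, u y ∂(P n a' x₂)) ≤ Δn * spanSeminorm u := by
    intro a a' x₁ x₂
    obtain ⟨D, hD, hDle⟩ := aux_key (P n a x₁) (P n a' x₂) hum huK
    calc (∫ y, u y ∂(P n a x₁)) - (∫ y, u y ∂(P n a' x₂))
        ≤ ((P n a x₁ D).toReal - (P n a' x₂ D).toReal) * spanSeminorm u := hDle
    _ ≤ Δn * spanSeminorm u :=
        mul_le_mul_of_nonneg_right (hΔle a a' x₁ x₂ D hD) hspan0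
  -- main estimate
  refine ciSup_le fun p => ?_
  obtain ⟨x₁, x₂⟩ := p
  simp only [Pi.sub_apply]
  set f₁ : E → ℝ := fun x => ⨆ a : U, (c n x a + ∫ y, v₁ y ∂(P n a x)) with hf₁
  set f₂ : E → ℝ := fun x => ⨆ a : U, (c n x a + ∫ y, v₂ y ∂(P n a x)) with hf₂
  show f₁ x₁ - f₂ x₁ - (f₁ x₂ - f₂ x₂) ≤ Δn * spanSeminorm u
  set T : ℝ := ⨆ a' : U, -∫ y, u y ∂(P n a' x₂) with hT
  have hTbdd : BddAbove (Set.range fun a' : U => -∫ y, u y ∂(P n a' x₂)) := by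
    refine ⟨K₁ + K₂, ?_⟩
    rintro _ ⟨a', rfl⟩
    have := abs_le.1 (hIb huK a' x₂)
    dsimp; linarith
  -- f₂ x₂ ≤ f₁ x₂ + T
  have hstep3 : f₂ x₂ ≤ f₁ x₂ + T := by
    refine ciSup_le fun a' => ?_
    have h1 : c n x₂ a' + ∫ y, v₁ y ∂(P n a' x₂) ≤ f₁ x₂ := le_ciSup (hbdd₁ x₂) a'
    have h2 : -∫ y, u y ∂(P n a' x₂) ≤ T := le_ciSup hTbdd a'
    have h3 := hint_sub a' x₂
    linarith
  -- T ≤ Δn * span u - ∫ u dP n a x₁, for each a; combined via ciSup_le on f₁ x₁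
  have hmain : f₁ x₁ ≤ Δn * spanSeminorm u + f₂ x₁ + f₁ x₂ - f₂ x₂ := by
    refine ciSup_le fun a => ?_
    have h1 : c n x₁ a + ∫ y, v₂ y ∂(P n a x₁) ≤ f₂ x₁ := le_ciSup (hbdd₂ x₁) a
    have h2 : T ≤ Δn * spanSeminorm u - ∫ y, u y ∂(P n a x₁) := by
      refine ciSup_le fun a' => ?_
      have := hS_each a a' x₁ x₂
      linarith
    have h3 := hint_sub a x₁
    linarith
  linarith
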